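/- Let σ ⊆ N_ℚ be a strongly convex polyhedral cone and Δ₁, Δ₂ two σ-polyhedra in N_ℚ. Then Δ₁ = Δ₂ if and only if h_{Δ₁}(m) = h_{Δ₂}(m) for every lattice point m in the relative interior of σ^∨. -/

import Mathlib

open scoped Pointwise

/-- The standard pairing between `M_ℚ` and `N_ℚ`, both identified with `Fin n → ℚ`. -/
def pairQ {n : ℕ} (m v : Fin n → ℚ) : ℚ := ∑ i, m i * v i

/-- The conical hull (set of nonnegative rational combinations) of a set. -/
def coneHull {n : ℕ} (S : Set (Fin n → ℚ)) : Set (Fin n → ℚ) :=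
  {v | ∃ (T : Finset (Fin n → ℚ)) (c : (Fin n → ℚ) → ℚ),
      ↑T ⊆ S ∧ (∀ x ∈ T, 0 ≤ c x) ∧ v = ∑ x ∈ T, c x • x}

/-- A polyhedral cone is the conical hull of a finite set. -/
def IsPolyhedralCone {n : ℕ} (σ : Set (Fin n → ℚ)) : Prop :=
  ∃ S : Finset (Fin n → ℚ), σ = coneHull ↑S

/-- A cone is strongly convex (pointed) if it contains no line. -/
def IsStronglyConvex {n : ℕ} (σ : Set (Fin n → ℚ)) : Prop :=
  ∀ v ∈ σ, -v ∈ σ → v = 0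

/-- The dual cone `σ^∨ ⊆ M_ℚ` of a cone `σ ⊆ N_ℚ`. -/
def dualCone {n : ℕ} (σ : Set (Fin n → ℚ)) : Set (Fin n → ℚ) :=
  {m | ∀ v ∈ σ, 0 ≤ pairQ m v}

/-- A `σ`-polyhedron: Minkowski sum of a (nonempty) polytope with the cone `σ`. -/
def IsSigmaPolyhedron {n : ℕ} (σ Δ : Set (Fin n → ℚ)) : Prop :=
  ∃ Q : Finset (Fin n → ℚ), Q.Nonempty ∧ Δ = convexHull ℚ ↑Q + σ

/-- The relative interior of a convex set, characterized via the stretching property. -/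
def relint {n : ℕ} (C : Set (Fin n → ℚ)) : Set (Fin n → ℚ) :=
  {x | x ∈ C ∧ ∀ y ∈ C, ∃ t : ℚ, 1 < t ∧ y + t • (x - y) ∈ C}

open Finset


lemma sum_dite_subtype {ι : Type} [Fintype ι] (P : ι → Prop) [DecidablePred P] (f : {i // P i} → ℚ) :
    ∑ i, (if h : P i then f ⟨i, h⟩ else 0) = ∑ i : {i // P i}, f i := by
  classical
  have h1 : ∑ i, (if h : P i then f ⟨i, h⟩ else 0)
      = ∑ i ∈ Finset.univ.filter P, (if h : P i then f ⟨i, h⟩ else 0) :=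
    (Finset.sum_filter_of_ne (fun i _ hne => by
      by_contra hP; rw [dif_neg hP] at hne; exact hne rfl)).symm
  rw [h1, Finset.sum_subtype (p := P) _ (by simp) (fun i => if h : P i then f ⟨i, h⟩ else 0)]
  exact Fintype.sum_congr _ _ (fun i => dif_pos i.2)

theorem farkas (d : ℕ) : ∀ (ι : Type) [Fintype ι] (w : ι → Fin d → ℚ) (b : ι → ℚ),
    (¬ ∃ x : Fin d → ℚ, ∀ i, ∑ j, w i j * x j ≤ b i) →
    ∃ y : ι → ℚ, (∀ i, 0 ≤ y i) ∧ (∀ j, ∑ i, y i * w i j = 0) ∧ ∑ i, y i * b i < 0 := by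
  induction d with
  | zero =>
    intro ι _ w b h
    classical
    push_neg at h
    obtain ⟨i, hi⟩ := h (fun j => 0)
    simp only [Finset.univ_eq_empty, Finset.sum_empty, not_le] at hi
    refine ⟨fun i' => if i' = i then 1 else 0, fun i' => by positivity, fun j => j.elim0, ?_⟩
    rw [Finset.sum_eq_single i]
    · simpa using hi
    · intro i' _ hne; simp [if_neg hne]
    · intro hni; exact absurd (Finset.mem_univ i) hni
  | succ d ih =>
    intro ι _ w b h
    classical
    set a : ι → ℚ := fun i => w i (Fin.last d) with ha
    set w' : ι → Fin d → ℚ := fun i j => w i j.castSucc with hw'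
    set W : ({i : ι // a i = 0} ⊕ ({i : ι // 0 < a i} × {i : ι // a i < 0})) → Fin d → ℚ :=
      fun k => match k with
      | .inl i => w' i.1
      | .inr (p, q) => fun j => (-a q.1) * w' p.1 j + a p.1 * w' q.1 j with hW
    set B : ({i : ι // a i = 0} ⊕ ({i : ι // 0 < a i} × {i : ι // a i < 0})) → ℚ :=
      fun k => match k with
      | .inl i => b i.1
      | .inr (p, q) => (-a q.1) * b p.1 + a p.1 * b q.1 with hB
    have hrow : ∀ (i : ι) (x' : Fin d → ℚ) (t : ℚ),
        ∑ j, w i j * (Fin.snoc x' t : Fin (d+1) → ℚ) j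
          = (∑ j, w' i j * x' j) + a i * t := by
      intro i x' t
      rw [Fin.sum_univ_castSucc]
      simp [ha, hw']
    have hnew : ¬ ∃ x : Fin d → ℚ, ∀ k, ∑ j, W k j * x j ≤ B k := by
      rintro ⟨x', hx'⟩
      apply h
      set s : ι → ℚ := fun i => ∑ j, w' i j * x' j with hs
      set P : Finset ι := Finset.univ.filter (fun i => 0 < a i) with hP
      set Ng : Finset ι := Finset.univ.filter (fun i => a i < 0) with hNg
      set U : ι → ℚ := fun i => (b i - s i) / a i with hU
      have hUe : ∀ i, a i ≠ 0 → a i * U i = b i - s i := by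
        intro i hai
        rw [hU]; field_simp
      have hcomb : ∀ p ∈ P, ∀ q ∈ Ng, U q ≤ U p := by
        intro p hp q hq
        rw [hP, Finset.mem_filter] at hp
        rw [hNg, Finset.mem_filter] at hq
        have h1 := hx' (.inr (⟨p, hp.2⟩, ⟨q, hq.2⟩))
        simp only [hW, hB] at h1
        have h2 : (-a q) * s p + a p * s q ≤ (-a q) * b p + a p * b q := by
          calc (-a q) * s p + a p * s q
              = ∑ j, ((-a q) * w' p j + a p * w' q j) * x' j := by
                simp [hs, Finset.mul_sum, add_mul, Finset.sum_add_distrib, mul_assoc]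
            _ ≤ _ := h1
        have e1 := hUe p (ne_of_gt hp.2)
        have e2 := hUe q (ne_of_lt hq.2)
        nlinarith [mul_pos hp.2 (neg_pos.mpr hq.2)]
      obtain ⟨t, htP, htN⟩ : ∃ t : ℚ, (∀ p ∈ P, t ≤ U p) ∧ (∀ q ∈ Ng, U q ≤ t) := by
        rcases P.eq_empty_or_nonempty with hPe | hPn
        · rcases Ng.eq_empty_or_nonempty with hNe | hNn
          · exact ⟨0, by simp [hPe], by simp [hNe]⟩
          · exact ⟨Ng.sup' hNn U, by simp [hPe], fun q hq => Finset.le_sup' U hq⟩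
        · refine ⟨P.inf' hPn U, fun p hp => Finset.inf'_le U hp, fun q hq => ?_⟩
          obtain ⟨p₀, hp₀, he⟩ := Finset.exists_mem_eq_inf' hPn U
          rw [he]; exact hcomb p₀ hp₀ q hq
      refine ⟨Fin.snoc x' t, fun i => ?_⟩
      rw [hrow]
      rcases lt_trichotomy (a i) 0 with hai | hai | hai
      · have hUi : U i ≤ t := htN i (by simp [hNg, hai])
        have h3 : a i * t ≤ a i * U i := mul_le_mul_of_nonpos_left hUi hai.le
        have e := hUe i (ne_of_lt hai)
        show s i + a i * t ≤ b i
        linarith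
      · have h0 := hx' (.inl ⟨i, hai⟩)
        simp only [hW, hB] at h0
        show s i + a i * t ≤ b i
        rw [hai]
        simpa [hs] using h0
      · have hUi : t ≤ U i := htP i (by simp [hP, hai])
        have h3 : a i * t ≤ a i * U i := mul_le_mul_of_nonneg_left hUi hai.le
        have e := hUe i (ne_of_gt hai)
        show s i + a i * t ≤ b i
        linarith
    obtain ⟨z, hz0, hzw, hzb⟩ := ih _ W B hnew
    set y : ι → ℚ := fun i =>
        (if h : a i = 0 then z (.inl ⟨i, h⟩) else 0)
      + ((if h : 0 < a i then ∑ q : {i : ι // a i < 0}, (-a q.1) * z (.inr (⟨i, h⟩, q)) else 0)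
      + (if h : a i < 0 then ∑ p : {i : ι // 0 < a i}, a p.1 * z (.inr (p, ⟨i, h⟩)) else 0))
      with hy
    have key : ∀ c : ι → ℚ, ∑ i, y i * c i
        = ∑ i : {i : ι // a i = 0}, z (.inl i) * c i.1
          + ∑ p : {i : ι // 0 < a i}, ∑ q : {i : ι // a i < 0},
              z (.inr (p, q)) * ((-a q.1) * c p.1 + a p.1 * c q.1) := by
      intro c
      set f₀ : {i : ι // a i = 0} → ℚ := fun i => z (.inl i) * c i.1 with hf₀
      set f₁ : {i : ι // 0 < a i} → ℚ :=
        fun p => ∑ q : {i : ι // a i < 0}, z (.inr (p, q)) * ((-a q.1) * c p.1) with hf₁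
      set f₂ : {i : ι // a i < 0} → ℚ :=
        fun q => ∑ p : {i : ι // 0 < a i}, z (.inr (p, q)) * (a p.1 * c q.1) with hf₂
      have expand : ∀ i, y i * c i =
          (if h : a i = 0 then f₀ ⟨i, h⟩ else 0)
        + ((if h : 0 < a i then f₁ ⟨i, h⟩ else 0)
        + (if h : a i < 0 then f₂ ⟨i, h⟩ else 0)) := by
        intro i
        simp only [hy]
        by_cases h0 : a i = 0
        · have h1 : ¬ 0 < a i := by rw [h0]; exact lt_irrefl 0
          have h2 : ¬ a i < 0 := by rw [h0]; exact lt_irrefl 0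
          rw [dif_pos h0, dif_neg h1, dif_neg h2, dif_pos h0, dif_neg h1, dif_neg h2]
          rw [hf₀]; ring
        · rw [dif_neg h0, dif_neg h0]
          rcases lt_or_gt_of_ne h0 with hn | hp
          · have h1 : ¬ 0 < a i := by exact not_lt.mpr hn.le
            rw [dif_neg h1, dif_pos hn, dif_neg h1, dif_pos hn, hf₂]
            simp only [zero_add]
            rw [Finset.sum_mul]
            exact Finset.sum_congr rfl (fun p _ => by ring)
          · have h2 : ¬ a i < 0 := not_lt.mpr hp.le
            rw [dif_pos hp, dif_neg h2, dif_pos hp, dif_neg h2, hf₁]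
            simp only [zero_add, add_zero]
            rw [Finset.sum_mul]
            exact Finset.sum_congr rfl (fun q _ => by ring)
      rw [Finset.sum_congr rfl (fun i _ => expand i), Finset.sum_add_distrib,
        Finset.sum_add_distrib,
        sum_dite_subtype (fun i => a i = 0) f₀,
        sum_dite_subtype (fun i => 0 < a i) f₁,
        sum_dite_subtype (fun i => a i < 0) f₂]
      rw [hf₀, hf₁, hf₂]
      rw [Finset.sum_comm (s := Finset.univ) (t := Finset.univ)
        (f := fun q p => z (.inr (p, q)) * (a p.1 * c q.1))]
      rw [← Finset.sum_add_distrib]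
      congr 1
      refine Fintype.sum_congr _ _ (fun p => ?_)
      rw [← Finset.sum_add_distrib]
      exact Fintype.sum_congr _ _ (fun q => by ring)
    refine ⟨y, ?_, ?_, ?_⟩
    · intro i
      have h1 : (0:ℚ) ≤ (if h : a i = 0 then z (.inl ⟨i, h⟩) else 0) := by
        split
        · exact hz0 _
        · exact le_rfl
      have h2 : (0:ℚ) ≤ (if h : 0 < a i then
          ∑ q : {i : ι // a i < 0}, (-a q.1) * z (.inr (⟨i, h⟩, q)) else 0) := by
        split
        · exact Finset.sum_nonneg fun q _ =>
            mul_nonneg (neg_nonneg.mpr q.2.le) (hz0 _)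
        · exact le_rfl
      have h3 : (0:ℚ) ≤ (if h : a i < 0 then
          ∑ p : {i : ι // 0 < a i}, a p.1 * z (.inr (p, ⟨i, h⟩)) else 0) := by
        split
        · exact Finset.sum_nonneg fun p _ => mul_nonneg p.2.le (hz0 _)
        · exact le_rfl
      exact add_nonneg h1 (add_nonneg h2 h3)
    · intro j
      refine Fin.lastCases ?_ (fun j' => ?_) j
      · have goalEq : ∑ i, y i * w i (Fin.last d) = ∑ i, y i * a i := rfl
        rw [goalEq, key a]
        have e1 : ∑ i : {i : ι // a i = 0}, z (.inl i) * a i.1 = 0 :=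
          Finset.sum_eq_zero (fun i _ => by rw [i.2, mul_zero])
        have e2 : ∑ p : {i : ι // 0 < a i}, ∑ q : {i : ι // a i < 0},
            z (.inr (p, q)) * ((-a q.1) * a p.1 + a p.1 * a q.1) = 0 :=
          Finset.sum_eq_zero (fun p _ => Finset.sum_eq_zero (fun q _ => by ring))
        rw [e1, e2, add_zero]
      · have goalEq : ∑ i, y i * w i j'.castSucc = ∑ i, y i * w' i j' := rfl
        rw [goalEq, key (fun i => w' i j')]
        have hz := hzw j'
        rw [Fintype.sum_sum_type, Fintype.sum_prod_type] at hz
        exact hz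
    · have hz := hzb
      rw [Fintype.sum_sum_type, Fintype.sum_prod_type] at hz
      rw [key b]
      exact hz

variable {n : ℕ}

lemma pairQ_add_right (m u v : Fin n → ℚ) : pairQ m (u + v) = pairQ m u + pairQ m v := by
  simp [pairQ, mul_add, Finset.sum_add_distrib]

lemma pairQ_smul_right (m : Fin n → ℚ) (c : ℚ) (v : Fin n → ℚ) :
    pairQ m (c • v) = c * pairQ m v := by
  simp [pairQ, Finset.mul_sum]; exact Finset.sum_congr rfl fun i _ => by ring

lemma pairQ_zero_right (m : Fin n → ℚ) : pairQ m 0 = 0 := by simp [pairQ]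

lemma pairQ_comm (m v : Fin n → ℚ) : pairQ m v = pairQ v m := by
  exact Finset.sum_congr rfl fun i _ => mul_comm _ _

lemma pairQ_add_left (u v m : Fin n → ℚ) : pairQ (u + v) m = pairQ u m + pairQ v m := by
  rw [pairQ_comm, pairQ_add_right, pairQ_comm m u, pairQ_comm m v]

lemma pairQ_smul_left (c : ℚ) (u m : Fin n → ℚ) : pairQ (c • u) m = c * pairQ u m := by
  rw [pairQ_comm, pairQ_smul_right, pairQ_comm m u]

lemma pairQ_sum_right (m : Fin n → ℚ) (T : Finset (Fin n → ℚ)) (c : (Fin n → ℚ) → ℚ) :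
    pairQ m (∑ x ∈ T, c x • x) = ∑ x ∈ T, c x * pairQ m x := by
  classical
  induction T using Finset.induction_on with
  | empty => simp [pairQ_zero_right]
  | insert _ _ hx ih =>
    rw [Finset.sum_insert hx, pairQ_add_right, pairQ_smul_right, Finset.sum_insert hx, ih]

lemma zero_mem_coneHull (S : Set (Fin n → ℚ)) : 0 ∈ coneHull S :=
  ⟨∅, fun _ => 0, by simp, by simp, by simp⟩

lemma mem_coneHull_of_mem {S : Set (Fin n → ℚ)} {s : Fin n → ℚ} (hs : s ∈ S) :
    s ∈ coneHull S := by
  refine ⟨{s}, fun _ => 1, by simp [hs], by simp, by simp⟩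

lemma mem_dualCone_coneHull (S : Finset (Fin n → ℚ)) (m : Fin n → ℚ) :
    m ∈ dualCone (coneHull ↑S) ↔ ∀ s ∈ S, 0 ≤ pairQ m s := by
  constructor
  · exact fun hm s hs => hm s (mem_coneHull_of_mem hs)
  · rintro hm v ⟨T, c, hTS, hc, rfl⟩
    rw [pairQ_sum_right]
    exact Finset.sum_nonneg fun x hx =>
      mul_nonneg (hc x hx) (hm x (hTS hx))

lemma isLeast_pair_polyhedron (S Q : Finset (Fin n → ℚ)) (hQ : Q.Nonempty)
    (m : Fin n → ℚ) (hm : ∀ s ∈ S, 0 ≤ pairQ m s) :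
    IsLeast ((fun v => pairQ m v) '' (convexHull ℚ ↑Q + coneHull ↑S))
      (Q.inf' hQ (pairQ m)) := by
  constructor
  · obtain ⟨q₀, hq₀, he⟩ := Finset.exists_mem_eq_inf' hQ (pairQ m)
    refine ⟨q₀, ?_, he.symm⟩
    have hq₀' : q₀ ∈ convexHull ℚ (↑Q : Set (Fin n → ℚ)) :=
      subset_convexHull _ _ (Finset.mem_coe.mpr hq₀)
    have : q₀ + 0 ∈ convexHull ℚ ↑Q + coneHull ↑S :=
      Set.add_mem_add hq₀' (zero_mem_coneHull _)
    simpa using this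
  · rintro x ⟨v, hv, rfl⟩
    obtain ⟨p, hp, u, hu, rfl⟩ := Set.mem_add.1 hv
    have hpu : pairQ m (p + u) = pairQ m p + pairQ m u := pairQ_add_right m p u
    have hu0 : 0 ≤ pairQ m u := (mem_dualCone_coneHull S m).2 hm u hu
    have hpge : Q.inf' hQ (pairQ m) ≤ pairQ m p := by
      have hsub : convexHull ℚ ↑Q ⊆ {x | Q.inf' hQ (pairQ m) ≤ pairQ m x} := by
        apply convexHull_min
        · intro q hq
          exact Finset.inf'_le (pairQ m) (by exact_mod_cast hq)
        · intro x hx y hy α β hα hβ hαβ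
          have e : pairQ m (α • x + β • y) = α * pairQ m x + β * pairQ m y := by
            rw [pairQ_add_right, pairQ_smul_right, pairQ_smul_right]
          simp only [Set.mem_setOf_eq] at hx hy ⊢
          rw [e]
          have e2 : α * Q.inf' hQ (pairQ m) + β * Q.inf' hQ (pairQ m)
              = Q.inf' hQ (pairQ m) := by rw [← add_mul, hαβ, one_mul]
          nlinarith [mul_le_mul_of_nonneg_left hx hα, mul_le_mul_of_nonneg_left hy hβ]
      exact hsub hp
    simp only
    linarith

lemma mem_relint_dualCone (S : Finset (Fin n → ℚ)) (m : Fin n → ℚ)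
    (hm : ∀ s ∈ S, s ≠ 0 → 0 < pairQ m s) :
    m ∈ relint (dualCone (coneHull ↑S)) := by
  classical
  have hm0 : ∀ s ∈ S, 0 ≤ pairQ m s := by
    intro s hs
    by_cases h0 : s = 0
    · rw [h0, pairQ_zero_right]
    · exact (hm s hs h0).le
  refine ⟨(mem_dualCone_coneHull S m).2 hm0, ?_⟩
  intro y hy
  have hy' : ∀ s ∈ S, 0 ≤ pairQ y s := (mem_dualCone_coneHull S y).1 hy
  set Bd : Finset (Fin n → ℚ) := S.filter (fun s => pairQ m s < pairQ y s) with hBd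
  have expand : ∀ s t, pairQ (y + t • (m - y)) s = pairQ y s + t * (pairQ m s - pairQ y s) := by
    intro s t
    rw [pairQ_add_left, pairQ_smul_left]
    have : pairQ (m - y) s = pairQ m s - pairQ y s := by
      have := pairQ_add_left (m - y) y s
      simp only [sub_add_cancel] at this
      linarith
    rw [this]
  have hBpos : ∀ s ∈ Bd, 0 < pairQ m s ∧ pairQ m s < pairQ y s := by
    intro s hs
    rw [hBd, Finset.mem_filter] at hs
    have hne : s ≠ 0 := by
      intro h0
      rw [h0, pairQ_zero_right, pairQ_zero_right] at hs
      exact lt_irrefl 0 hs.2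
    exact ⟨hm s hs.1 hne, hs.2⟩
  set R : (Fin n → ℚ) → ℚ := fun s => pairQ y s / (pairQ y s - pairQ m s) with hR
  rcases Bd.eq_empty_or_nonempty with hBe | hBn
  · refine ⟨2, one_lt_two, (mem_dualCone_coneHull S _).2 ?_⟩
    intro s hs
    rw [expand]
    have hsB : pairQ y s ≤ pairQ m s := by
      by_contra hc
      have : s ∈ Bd := by rw [hBd, Finset.mem_filter]; exact ⟨hs, not_le.mp hc⟩
      rw [hBe] at this
      exact absurd this (Finset.notMem_empty s)
    have := hy' s hs
    linarith
  · refine ⟨Bd.inf' hBn R, ?_, ?_⟩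
    · rw [Finset.lt_inf'_iff]
      intro s hs
      obtain ⟨h1, h2⟩ := hBpos s hs
      rw [hR]
      rw [one_lt_div (by linarith)]
      linarith
    · refine (mem_dualCone_coneHull S _).2 ?_
      intro s hs
      rw [expand]
      by_cases hsB : s ∈ Bd
      · obtain ⟨h1, h2⟩ := hBpos s hsB
        have hle : Bd.inf' hBn R ≤ R s := Finset.inf'_le R hsB
        have hpos : (0:ℚ) < pairQ y s - pairQ m s := by linarith
        have h3 : Bd.inf' hBn R * (pairQ y s - pairQ m s) ≤ R s * (pairQ y s - pairQ m s) :=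
          mul_le_mul_of_nonneg_right hle hpos.le
        have h4 : R s * (pairQ y s - pairQ m s) = pairQ y s := by
          rw [hR]; field_simp
        nlinarith
      · have hge : pairQ y s ≤ pairQ m s := by
          by_contra hc
          exact hsB (by rw [hBd, Finset.mem_filter]; exact ⟨hs, not_le.mp hc⟩)
        have h0 : (0:ℚ) ≤ pairQ y s := hy' s hs
        have ht : (1:ℚ) < Bd.inf' hBn R := by
          rw [Finset.lt_inf'_iff]
          intro s' hs'
          obtain ⟨h1, h2⟩ := hBpos s' hs'
          rw [hR, one_lt_div (by linarith)]
          linarith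
        nlinarith


lemma exists_int_scaling (m : Fin n → ℚ) :
    ∃ (d : ℕ) (mz : Fin n → ℤ), 0 < d ∧ ∀ i, (mz i : ℚ) = (d : ℚ) * m i := by
  classical
  refine ⟨∏ i, (m i).den, fun i => ((∏ k, (m k).den) / (m i).den : ℕ) * (m i).num, ?_, ?_⟩
  · exact Finset.prod_pos fun i _ => (m i).pos
  · intro i
    obtain ⟨c, hc⟩ : (m i).den ∣ ∏ k, (m k).den :=
      Finset.dvd_prod_of_mem (fun k => (m k).den) (Finset.mem_univ i)
    have hden : ((m i).den : ℚ) ≠ 0 := Nat.cast_ne_zero.mpr (m i).den_nz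
    have hdm : ((m i).den : ℚ) * m i = ((m i).num : ℚ) := by
      exact_mod_cast Rat.den_mul_eq_num (m i)
    have hq : ((∏ k, (m k).den) / (m i).den : ℕ) = c := by
      rw [hc]; exact Nat.mul_div_cancel_left c (by exact_mod_cast (m i).pos)
    simp only [hq]
    rw [hc]
    push_cast
    rw [← hdm]
    ring

lemma exists_positive_functional (S : Finset (Fin n → ℚ))
    (hconv : IsStronglyConvex (coneHull (↑S : Set (Fin n → ℚ)))) :
    ∃ m : Fin n → ℚ, ∀ s ∈ S, s ≠ 0 → 0 < pairQ m s := by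
  classical
  set S' : Finset (Fin n → ℚ) := S.filter (fun s => s ≠ 0) with hS'
  by_cases hfeas : ∃ x : Fin n → ℚ, ∀ i : {v // v ∈ S'}, ∑ j, (-(i.1 j)) * x j ≤ -1
  · obtain ⟨x, hx⟩ := hfeas
    refine ⟨x, fun s hs hne => ?_⟩
    have hmem : s ∈ S' := by rw [hS', Finset.mem_filter]; exact ⟨hs, hne⟩
    have h1 := hx ⟨s, hmem⟩
    have h2 : ∑ j, (-(s j)) * x j = -pairQ x s := by
      rw [pairQ, ← Finset.sum_neg_distrib]
      exact Finset.sum_congr rfl fun j _ => by ring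
    rw [h2] at h1
    linarith
  · exfalso
    obtain ⟨y, hy0, hyw, hyb⟩ := farkas n {v // v ∈ S'}
      (fun i j => -(i.1 j)) (fun _ => -1) hfeas
    have hsum : 0 < ∑ i : {v // v ∈ S'}, y i := by
      have := hyb
      simp only [mul_neg_one, Finset.sum_neg_distrib] at this
      linarith
    obtain ⟨i₀, -, hi₀⟩ := Finset.exists_lt_of_sum_lt (f := fun _ => (0:ℚ))
      (by simpa using hsum)
    -- the vector identity
    have hvec : ∀ j, ∑ i : {v // v ∈ S'}, y i * i.1 j = 0 := by
      intro j
      have h1 := hyw j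
      have h2 : ∑ i : {v // v ∈ S'}, y i * i.1 j
          = - ∑ i : {v // v ∈ S'}, y i * -(i.1 j) := by
        rw [← Finset.sum_neg_distrib]
        exact Finset.sum_congr rfl fun i _ => by ring
      rw [h2, h1, neg_zero]
    -- extend y to a function on vectors
    set Y : (Fin n → ℚ) → ℚ := fun x => if hx : x ∈ S' then y ⟨x, hx⟩ else 0 with hY
    have hYsum : ∀ j, ∑ x ∈ S', Y x * x j = 0 := by
      intro j
      have e : ∑ x ∈ S', Y x * x j = ∑ i : {v // v ∈ S'}, y i * i.1 j := by
        rw [← Finset.sum_coe_sort S' (fun x => Y x * x j)]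
        exact Fintype.sum_congr _ _ (fun i => by rw [hY]; simp only [dif_pos i.2])
      rw [e, hvec j]
    have hi₀S : (i₀ : Fin n → ℚ) ∈ S' := i₀.2
    have hmem₀ : (i₀ : Fin n → ℚ) ∈ S.filter (fun s => s ≠ 0) := i₀.2
    have hi₀ne : (i₀ : Fin n → ℚ) ≠ 0 := (Finset.mem_filter.mp hmem₀).2
    have hi₀S2 : (i₀ : Fin n → ℚ) ∈ S := (Finset.mem_filter.mp hmem₀).1
    -- -i₀ ∈ coneHull S
    have hneg : -(i₀ : Fin n → ℚ) ∈ coneHull (↑S : Set (Fin n → ℚ)) := by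
      refine ⟨S'.erase i₀.1, fun x => (y i₀)⁻¹ * Y x, ?_, ?_, ?_⟩
      · intro x hx
        have hx' : x ∈ S.filter (fun s => s ≠ 0) :=
          Finset.erase_subset _ _ (by exact_mod_cast hx)
        exact Finset.mem_coe.mpr (Finset.mem_filter.mp hx').1
      · intro x hx
        refine mul_nonneg (inv_nonneg.mpr hi₀.le) ?_
        simp only [hY]
        split
        · exact hy0 _
        · exact le_rfl
      · funext j
        have hsplit : Y i₀.1 * (i₀.1 j) + ∑ x ∈ S'.erase i₀.1, Y x * x j = 0 := by
          have h := Finset.add_sum_erase S' (fun x => Y x * x j) hi₀S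
          rw [hYsum j] at h
          exact h
        have hYi₀ : Y i₀.1 = y i₀ := by simp only [hY, dif_pos hi₀S]
        have happ : (∑ x ∈ S'.erase i₀.1, ((y i₀)⁻¹ * Y x) • x) j
            = ∑ x ∈ S'.erase i₀.1, ((y i₀)⁻¹ * Y x) * x j := by
          rw [Finset.sum_apply]
          exact Finset.sum_congr rfl fun x _ => rfl
        rw [Pi.neg_apply, happ]
        have : ∑ x ∈ S'.erase i₀.1, ((y i₀)⁻¹ * Y x) * x j
            = (y i₀)⁻¹ * ∑ x ∈ S'.erase i₀.1, Y x * x j := by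
          rw [Finset.mul_sum]
          exact Finset.sum_congr rfl fun x _ => by ring
        have hyne : y i₀ ≠ 0 := ne_of_gt hi₀
        rw [hYi₀] at hsplit
        have hsum2 : ∑ x ∈ S'.erase i₀.1, Y x * x j = -(y i₀ * i₀.1 j) := by
          linarith [hsplit]
        rw [this, hsum2]
        field_simp
    have hpos : (i₀ : Fin n → ℚ) ∈ coneHull (↑S : Set (Fin n → ℚ)) :=
      mem_coneHull_of_mem (Finset.mem_coe.mpr hi₀S2)
    exact hi₀ne (hconv _ hpos hneg)

lemma separation (Q S : Finset (Fin n → ℚ)) (hQ : Q.Nonempty) (v : Fin n → ℚ)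
    (hv : v ∉ convexHull ℚ (↑Q : Set (Fin n → ℚ)) + coneHull (↑S : Set (Fin n → ℚ))) :
    ∃ m : Fin n → ℚ, (∀ s ∈ S, 0 ≤ pairQ m s) ∧ pairQ m v < Q.inf' hQ (pairQ m) := by
  classical
  have hrowQ : ∀ (u : Fin n → ℚ) (x : Fin (n+1) → ℚ),
      ∑ j, (Fin.snoc (fun j => -(u j)) (-1) : Fin (n+1) → ℚ) j * x j
        = -pairQ (fun j => x j.castSucc) u - x (Fin.last n) := by
    intro u x
    rw [Fin.sum_univ_castSucc]
    simp only [Fin.snoc_castSucc, Fin.snoc_last, pairQ]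
    have e : ∑ j, -u j * x j.castSucc = -∑ j, x j.castSucc * u j := by
      rw [← Finset.sum_neg_distrib]
      exact Finset.sum_congr rfl fun j _ => by ring
    rw [e]; ring
  have hrowS : ∀ (u : Fin n → ℚ) (x : Fin (n+1) → ℚ),
      ∑ j, (Fin.snoc (fun j => -(u j)) 0 : Fin (n+1) → ℚ) j * x j
        = -pairQ (fun j => x j.castSucc) u := by
    intro u x
    rw [Fin.sum_univ_castSucc]
    simp only [Fin.snoc_castSucc, Fin.snoc_last, pairQ]
    have e : ∑ j, -u j * x j.castSucc = -∑ j, x j.castSucc * u j := by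
      rw [← Finset.sum_neg_distrib]
      exact Finset.sum_congr rfl fun j _ => by ring
    rw [e]; ring
  have hrowV : ∀ (x : Fin (n+1) → ℚ),
      ∑ j, (Fin.snoc v 1 : Fin (n+1) → ℚ) j * x j
        = pairQ (fun j => x j.castSucc) v + x (Fin.last n) := by
    intro x
    rw [Fin.sum_univ_castSucc]
    simp only [Fin.snoc_castSucc, Fin.snoc_last, pairQ]
    have e : ∑ j, v j * x j.castSucc = ∑ j, x j.castSucc * v j :=
      Finset.sum_congr rfl fun j _ => by ring
    rw [e]; ring
  set w : (({q // q ∈ Q} ⊕ {s // s ∈ S}) ⊕ Unit) → Fin (n+1) → ℚ := fun i => match i with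
    | .inl (.inl q) => Fin.snoc (fun j => -(q.1 j)) (-1)
    | .inl (.inr s) => Fin.snoc (fun j => -(s.1 j)) 0
    | .inr _ => Fin.snoc v 1 with hw
  set b : (({q // q ∈ Q} ⊕ {s // s ∈ S}) ⊕ Unit) → ℚ := fun i => match i with
    | .inl _ => 0
    | .inr _ => -1 with hb
  by_cases hfeas : ∃ x : Fin (n+1) → ℚ, ∀ i, ∑ j, w i j * x j ≤ b i
  · obtain ⟨x, hx⟩ := hfeas
    set m : Fin n → ℚ := fun j => x j.castSucc with hm
    set c : ℚ := x (Fin.last n) with hc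
    have hQc : ∀ q ∈ Q, -c ≤ pairQ m q := by
      intro q hq
      have h1 := hx (.inl (.inl ⟨q, hq⟩))
      simp only [hw, hb] at h1
      rw [hrowQ] at h1
      have : pairQ (fun j => x j.castSucc) q = pairQ m q := rfl
      rw [this] at h1
      linarith
    have hSc : ∀ s ∈ S, 0 ≤ pairQ m s := by
      intro s hs
      have h1 := hx (.inl (.inr ⟨s, hs⟩))
      simp only [hw, hb] at h1
      rw [hrowS] at h1
      have : pairQ (fun j => x j.castSucc) s = pairQ m s := rfl
      rw [this] at h1
      linarith
    have hvc : pairQ m v + c ≤ -1 := by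
      have h1 := hx (.inr ())
      simp only [hw, hb] at h1
      rw [hrowV] at h1
      exact h1
    refine ⟨m, hSc, ?_⟩
    have hinf : -c ≤ Q.inf' hQ (pairQ m) := Finset.le_inf' hQ _ (fun q hq => hQc q hq)
    linarith
  · exfalso
    obtain ⟨y, hy0, hyw, hyb⟩ := farkas (n+1) _ w b hfeas
    set γ : ℚ := y (.inr ()) with hγ
    have hγpos : 0 < γ := by
      rw [Fintype.sum_sum_type] at hyb
      simp only [hb, mul_zero, mul_neg_one, Finset.sum_const_zero, zero_add] at hyb
      have : ∑ u : Unit, -y (Sum.inr u) = -y (.inr ()) := by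
        simp
      rw [this] at hyb
      linarith
    have hγne : γ ≠ 0 := ne_of_gt hγpos
    have hlast : ∑ q : {q // q ∈ Q}, y (.inl (.inl q)) = γ := by
      have h1 := hyw (Fin.last n)
      rw [Fintype.sum_sum_type, Fintype.sum_sum_type] at h1
      simp only [hw, Fin.snoc_last] at h1
      simp only [mul_neg_one, mul_zero, mul_one, Finset.sum_const_zero, add_zero] at h1
      have h2 : ∑ u : Unit, y (Sum.inr u) = γ := by simp [hγ]
      rw [Finset.sum_neg_distrib, h2] at h1
      linarith
    have hcoord : ∀ j : Fin n,
        (∑ q : {q // q ∈ Q}, y (.inl (.inl q)) * q.1 j)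
          + (∑ s : {s // s ∈ S}, y (.inl (.inr s)) * s.1 j) = γ * v j := by
      intro j
      have h1 := hyw j.castSucc
      rw [Fintype.sum_sum_type, Fintype.sum_sum_type] at h1
      simp only [hw, Fin.snoc_castSucc] at h1
      have h2 : ∑ u : Unit, y (Sum.inr u) * v j = γ * v j := by simp [hγ]
      have e1 : ∑ q : {q // q ∈ Q}, y (.inl (.inl q)) * -(q.1 j)
          = -∑ q : {q // q ∈ Q}, y (.inl (.inl q)) * q.1 j := by
        rw [← Finset.sum_neg_distrib]
        exact Finset.sum_congr rfl fun q _ => by ring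
      have e2 : ∑ s : {s // s ∈ S}, y (.inl (.inr s)) * -(s.1 j)
          = -∑ s : {s // s ∈ S}, y (.inl (.inr s)) * s.1 j := by
        rw [← Finset.sum_neg_distrib]
        exact Finset.sum_congr rfl fun s _ => by ring
      rw [e1, e2, h2] at h1
      linarith
    set A : (Fin n → ℚ) → ℚ := fun x => if hx : x ∈ Q then y (.inl (.inl ⟨x, hx⟩)) / γ else 0
      with hA
    set B : (Fin n → ℚ) → ℚ := fun x => if hx : x ∈ S then y (.inl (.inr ⟨x, hx⟩)) / γ else 0
      with hB2
    have hA0 : ∀ x ∈ Q, 0 ≤ A x := by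
      intro x hx
      simp only [hA, dif_pos hx]
      exact div_nonneg (hy0 _) hγpos.le
    have hB0 : ∀ x ∈ S, 0 ≤ B x := by
      intro x hx
      simp only [hB2, dif_pos hx]
      exact div_nonneg (hy0 _) hγpos.le
    have hAsum : ∑ x ∈ Q, A x = 1 := by
      have e : ∑ x ∈ Q, A x = ∑ q : {q // q ∈ Q}, y (.inl (.inl q)) / γ := by
        rw [← Finset.sum_coe_sort Q A]
        exact Fintype.sum_congr _ _ (fun q => by simp only [hA, dif_pos q.2])
      rw [e, ← Finset.sum_div, hlast, div_self hγne]
    have hp : (∑ x ∈ Q, A x • x) ∈ convexHull ℚ (↑Q : Set (Fin n → ℚ)) := by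
      have hcm := Finset.centerMass_mem_convexHull Q hA0
        (by rw [hAsum]; exact one_pos) (fun i hi => Finset.mem_coe.mpr hi)
      rw [Finset.centerMass_eq_of_sum_1 _ _ hAsum] at hcm
      simpa using hcm
    have hu : (∑ x ∈ S, B x • x) ∈ coneHull (↑S : Set (Fin n → ℚ)) :=
      ⟨S, B, subset_rfl, hB0, rfl⟩
    have hvpu : v = (∑ x ∈ Q, A x • x) + (∑ x ∈ S, B x • x) := by
      funext j
      have happQ : (∑ x ∈ Q, A x • x) j = ∑ x ∈ Q, A x * x j := by
        rw [Finset.sum_apply]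
        exact Finset.sum_congr rfl fun x _ => rfl
      have happS : (∑ x ∈ S, B x • x) j = ∑ x ∈ S, B x * x j := by
        rw [Finset.sum_apply]
        exact Finset.sum_congr rfl fun x _ => rfl
      have eQ : ∑ x ∈ Q, A x * x j
          = (∑ q : {q // q ∈ Q}, y (.inl (.inl q)) * q.1 j) / γ := by
        rw [← Finset.sum_coe_sort Q (fun x => A x * x j), Finset.sum_div]
        exact Fintype.sum_congr _ _ (fun q => by
          simp only [hA, dif_pos q.2]; ring)
      have eS : ∑ x ∈ S, B x * x j
          = (∑ s : {s // s ∈ S}, y (.inl (.inr s)) * s.1 j) / γ := by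
        rw [← Finset.sum_coe_sort S (fun x => B x * x j), Finset.sum_div]
        exact Fintype.sum_congr _ _ (fun s => by
          simp only [hB2, dif_pos s.2]; ring)
      have hc := hcoord j
      rw [Pi.add_apply, happQ, happS, eQ, eS, ← add_div]
      rw [hc]
      field_simp
    exact hv (by rw [hvpu]; exact Set.add_mem_add hp hu)

lemma subset_of_inf_eq (S Q₁ Q₂ : Finset (Fin n → ℚ))
    (hconv : IsStronglyConvex (coneHull (↑S : Set (Fin n → ℚ))))
    (h₁ : Q₁.Nonempty) (h₂ : Q₂.Nonempty)
    (heq : ∀ m : Fin n → ℚ, (∀ s ∈ S, s ≠ 0 → 0 < pairQ m s) →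
        (∃ mz : Fin n → ℤ, (fun i => (mz i : ℚ)) = m) →
        Q₁.inf' h₁ (pairQ m) = Q₂.inf' h₂ (pairQ m)) :
    convexHull ℚ (↑Q₁ : Set (Fin n → ℚ)) + coneHull ↑S
      ⊆ convexHull ℚ (↑Q₂ : Set (Fin n → ℚ)) + coneHull ↑S := by
  classical
  intro v hv
  by_contra hvn
  obtain ⟨m, hmS, hmv⟩ := separation Q₂ S h₂ v hvn
  obtain ⟨m₀, hm₀⟩ := exists_positive_functional S hconv
  obtain ⟨d, mz, hd, hdz⟩ := exists_int_scaling m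
  obtain ⟨d₀, mz₀, hd₀, hdz₀⟩ := exists_int_scaling m₀
  set b₁ := Q₁.inf' h₁ (pairQ m) with hb₁
  set b₂ := Q₂.inf' h₂ (pairQ m) with hb₂
  have hb₁v : b₁ ≤ pairQ m v :=
    (isLeast_pair_polyhedron S Q₁ h₁ m hmS).2 ⟨v, hv, rfl⟩
  have hlt : b₁ < b₂ := lt_of_le_of_lt hb₁v hmv
  set μ : ℕ → (Fin n → ℚ) := fun N => ((N * d : ℚ)) • m + (d₀ : ℚ) • m₀ with hμ
  have pairμ : ∀ (N : ℕ) (q : Fin n → ℚ),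
      pairQ (μ N) q = (N * d : ℚ) * pairQ m q + (d₀ : ℚ) * pairQ m₀ q := by
    intro N q
    rw [hμ]
    simp only
    rw [pairQ_add_left, pairQ_smul_left, pairQ_smul_left]
  have hNd : ∀ N : ℕ, (0:ℚ) ≤ (N * d : ℚ) := by
    intro N
    positivity
  have key : ∀ N : ℕ, Q₁.inf' h₁ (pairQ (μ N)) = Q₂.inf' h₂ (pairQ (μ N)) := by
    intro N
    refine heq (μ N) ?_ ?_
    · intro s hs hne
      rw [pairμ]
      have h1 : 0 ≤ pairQ m s := hmS s hs
      have h2 : 0 < pairQ m₀ s := hm₀ s hs hne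
      have h3 : (0:ℚ) < d₀ := by exact_mod_cast hd₀
      nlinarith [hNd N]
    · refine ⟨fun i => N * mz i + mz₀ i, funext fun i => ?_⟩
      push_cast
      rw [hdz i, hdz₀ i, hμ]
      simp only [Pi.add_apply, Pi.smul_apply, smul_eq_mul]
      ring
  set c₁ := Q₁.sup' h₁ (fun q => (d₀ : ℚ) * pairQ m₀ q) with hc₁
  set c₂ := Q₂.inf' h₂ (fun q => (d₀ : ℚ) * pairQ m₀ q) with hc₂
  have up : ∀ N : ℕ, Q₁.inf' h₁ (pairQ (μ N)) ≤ (N * d : ℚ) * b₁ + c₁ := by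
    intro N
    obtain ⟨q₀, hq₀, hb⟩ := Finset.exists_mem_eq_inf' h₁ (pairQ m)
    have h1 : Q₁.inf' h₁ (pairQ (μ N)) ≤ pairQ (μ N) q₀ := Finset.inf'_le _ hq₀
    rw [pairμ] at h1
    have h2 : (d₀ : ℚ) * pairQ m₀ q₀ ≤ c₁ := by
      rw [hc₁]; exact Finset.le_sup' (fun q => (d₀ : ℚ) * pairQ m₀ q) hq₀
    rw [hb₁, hb]
    linarith
  have lo : ∀ N : ℕ, (N * d : ℚ) * b₂ + c₂ ≤ Q₂.inf' h₂ (pairQ (μ N)) := by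
    intro N
    refine Finset.le_inf' _ _ (fun q hq => ?_)
    rw [pairμ]
    have h1 : b₂ ≤ pairQ m q := Finset.inf'_le _ hq
    have h2 : c₂ ≤ (d₀ : ℚ) * pairQ m₀ q := by
      rw [hc₂]; exact Finset.inf'_le (fun q => (d₀ : ℚ) * pairQ m₀ q) hq
    nlinarith [hNd N]
  have hdb : (0:ℚ) < d * (b₂ - b₁) := by
    have : (0:ℚ) < d := by exact_mod_cast hd
    nlinarith
  obtain ⟨N, hN⟩ := exists_nat_gt ((c₁ - c₂) / (d * (b₂ - b₁)))
  have hNb : (c₁ - c₂) < (N : ℚ) * (d * (b₂ - b₁)) := by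
    rw [div_lt_iff₀ hdb] at hN
    linarith
  have hcontr : (N * d : ℚ) * b₂ + c₂ ≤ (N * d : ℚ) * b₁ + c₁ := by
    calc (N * d : ℚ) * b₂ + c₂ ≤ Q₂.inf' h₂ (pairQ (μ N)) := lo N
      _ = Q₁.inf' h₁ (pairQ (μ N)) := (key N).symm
      _ ≤ (N * d : ℚ) * b₁ + c₁ := up N
  nlinarith

/-- Two `σ`-polyhedra coincide iff their support functions agree on all
lattice points of the relative interior of `σ^∨`. -/
theorem stmt2 {n : ℕ} (σ Δ₁ Δ₂ : Set (Fin n → ℚ))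
    (hσpoly : IsPolyhedralCone σ) (hσconv : IsStronglyConvex σ)
    (hΔ₁ : IsSigmaPolyhedron σ Δ₁) (hΔ₂ : IsSigmaPolyhedron σ Δ₂) :
    Δ₁ = Δ₂ ↔
      ∀ m : Fin n → ℤ, (fun i => (m i : ℚ)) ∈ relint (dualCone σ) →
        ∀ a : ℚ, IsGLB ((fun v => pairQ (fun i => (m i : ℚ)) v) '' Δ₁) a ↔
          IsGLB ((fun v => pairQ (fun i => (m i : ℚ)) v) '' Δ₂) a := by
  obtain ⟨S, rfl⟩ := hσpoly
  obtain ⟨Q₁, hQ₁ne, hΔ₁e⟩ := hΔ₁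
  obtain ⟨Q₂, hQ₂ne, hΔ₂e⟩ := hΔ₂
  subst hΔ₁e
  subst hΔ₂e
  constructor
  · intro h m hm a
    rw [h]
  · intro H
    have heq : ∀ m : Fin n → ℚ, (∀ s ∈ S, s ≠ 0 → 0 < pairQ m s) →
        (∃ mz : Fin n → ℤ, (fun i => (mz i : ℚ)) = m) →
        Q₁.inf' hQ₁ne (pairQ m) = Q₂.inf' hQ₂ne (pairQ m) := by
      rintro m hpos ⟨mz, hmz⟩
      have hm0 : ∀ s ∈ S, 0 ≤ pairQ m s := by
        intro s hs
        by_cases h0 : s = 0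
        · rw [h0, pairQ_zero_right]
        · exact (hpos s hs h0).le
      have hrel : m ∈ relint (dualCone (coneHull ↑S)) := mem_relint_dualCone S m hpos
      have hG₁ : IsGLB ((fun v => pairQ m v) ''
          (convexHull ℚ ↑Q₁ + coneHull ↑S)) (Q₁.inf' hQ₁ne (pairQ m)) :=
        (isLeast_pair_polyhedron S Q₁ hQ₁ne m hm0).isGLB
      have hG₂ : IsGLB ((fun v => pairQ m v) ''
          (convexHull ℚ ↑Q₂ + coneHull ↑S)) (Q₂.inf' hQ₂ne (pairQ m)) :=
        (isLeast_pair_polyhedron S Q₂ hQ₂ne m hm0).isGLB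
      have Hm := H mz
      rw [hmz] at Hm
      have hG₁' := (Hm hrel (Q₁.inf' hQ₁ne (pairQ m))).1 hG₁
      exact hG₁'.unique hG₂
    apply Set.Subset.antisymm
    · exact subset_of_inf_eq S Q₁ Q₂ hσconv hQ₁ne hQ₂ne heq
    · exact subset_of_inf_eq S Q₂ Q₁ hσconv hQ₂ne hQ₁ne
        (fun m h1 h2 => (heq m h1 h2).symm)
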